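/- Let X be a real vector space, Y a real Banach space, and let f : X → Y be an even function with ‖D_f(x,y)‖ ≤ φ(x,y) for all x, y ∈ X, where φ : X × X → [0,∞) satisfies: ∑_{i=1}^∞ 16^i·(φ(x/2^i, x/2^{i+1}) + φ(x/2^i, x/2^i)) converges for all x ∈ X, and lim_{n→∞} 16^n·φ(x/2^n, y/2^n) = 0 for all x, y ∈ X. Then for each x ∈ X the limit Q₂(x) := lim_{n→∞} 16^n·(f(x/2^{n-1}) − 4·f(x/2^n)) exists, Q₂ : X → Y is a quartic function satisfying the mixed functional equation (1.5), ‖f(2x) − 4·f(x) − Q₂(x)‖ ≤ ∑_{i=0}^∞ 16^i·((1/3)·φ(x/2^i, x/2^{i+1}) + (16/3)·φ(x/2^{i+1}, x/2^{i+1})) for all x ∈ X, and Q₂ is the unique quartic function satisfying (1.5) and this inequality. -/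

import Mathlib

open Filter Topology

/-- The mixed quadratic-cubic-quartic functional equation (1.5). -/
def MixedEq {X Y : Type*} [AddCommGroup X] [AddCommGroup Y] (f : X → Y) : Prop :=
  ∀ x y : X, 3 • (f (x + 2 • y) + f (x - 2 • y)) =
    12 • (f (x + y) + f (x - y)) + 4 • f (3 • y) - 18 • f (2 • y) + 36 • f y - 18 • f x

/-- The difference operator D_f. -/
def Dop {X Y : Type*} [AddCommGroup X] [AddCommGroup Y] (f : X → Y) (x y : X) : Y :=
  3 • (f (x + 2 • y) + f (x - 2 • y)) - 12 • (f (x + y) + f (x - y))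
    - 4 • f (3 • y) + 18 • f (2 • y) - 36 • f y + 18 • f x

/-- Quadratic functional equation. -/
def IsQuadratic {X Y : Type*} [AddCommGroup X] [AddCommGroup Y] (g : X → Y) : Prop :=
  ∀ x y : X, g (x + y) + g (x - y) = 2 • g x + 2 • g y

/-- Cubic functional equation. -/
def IsCubic {X Y : Type*} [AddCommGroup X] [AddCommGroup Y] (c : X → Y) : Prop :=
  ∀ x y : X, c (2 • x + y) + c (2 • x - y) = 2 • c (x + y) + 2 • c (x - y) + 12 • c x

/-- Quartic functional equation. -/
def IsQuartic {X Y : Type*} [AddCommGroup X] [AddCommGroup Y] (q : X → Y) : Prop :=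
  ∀ x y : X, q (2 • x + y) + q (2 • x - y) = 4 • (q (x + y) + q (x - y)) + 24 • q x - 6 • q y

set_option maxHeartbeats 1000000

lemma dop_eq_sub {X Y : Type*} [AddCommGroup X] [AddCommGroup Y] (f : X → Y) (x y : X) :
    Dop f x y = 3 • (f (x + 2 • y) + f (x - 2 • y)) -
      (12 • (f (x + y) + f (x - y)) + 4 • f (3 • y) - 18 • f (2 • y) + 36 • f y - 18 • f x) := by
  simp only [Dop]; abel

lemma mixed_iff {X Y : Type*} [AddCommGroup X] [AddCommGroup Y] (f : X → Y) :
    MixedEq f ↔ ∀ x y : X, Dop f x y = 0 := by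
  constructor <;> intro h x y <;> have := h x y
  · rw [dop_eq_sub, this, sub_self]
  · rw [dop_eq_sub] at this; exact sub_eq_zero.mp this

theorem stmt_9 {X Y : Type*} [AddCommGroup X] [Module ℝ X]
    [NormedAddCommGroup Y] [NormedSpace ℝ Y] [CompleteSpace Y]
    (f : X → Y) (heven : ∀ x : X, f (-x) = f x)
    (φ : X → X → ℝ) (hφ0 : ∀ x y : X, 0 ≤ φ x y)
    (hbd : ∀ x y : X, ‖Dop f x y‖ ≤ φ x y)
    (hsum : ∀ x : X, Summable fun i : ℕ =>
      (16 : ℝ) ^ (i + 1) *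
        (φ (((2 : ℝ) ^ (i + 1))⁻¹ • x) (((2 : ℝ) ^ (i + 2))⁻¹ • x) +
          φ (((2 : ℝ) ^ (i + 1))⁻¹ • x) (((2 : ℝ) ^ (i + 1))⁻¹ • x)))
    (hlim : ∀ x y : X, Tendsto
      (fun n : ℕ => (16 : ℝ) ^ n * φ (((2 : ℝ) ^ n)⁻¹ • x) (((2 : ℝ) ^ n)⁻¹ • y)) atTop (𝓝 0)) :
    ∃ Q₂ : X → Y,
      (∀ x : X, Tendsto (fun n : ℕ =>
        (16 : ℝ) ^ n • (f (((2 : ℝ) ^ n)⁻¹ • (2 • x)) - 4 • f (((2 : ℝ) ^ n)⁻¹ • x)))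
        atTop (𝓝 (Q₂ x))) ∧
      IsQuartic Q₂ ∧ MixedEq Q₂ ∧
      (∀ x : X, ‖f (2 • x) - 4 • f x - Q₂ x‖ ≤
        ∑' i : ℕ, (16 : ℝ) ^ i *
          ((1 / 3) * φ (((2 : ℝ) ^ i)⁻¹ • x) (((2 : ℝ) ^ (i + 1))⁻¹ • x) +
            (16 / 3) * φ (((2 : ℝ) ^ (i + 1))⁻¹ • x) (((2 : ℝ) ^ (i + 1))⁻¹ • x))) ∧
      (∀ Q₂' : X → Y, IsQuartic Q₂' → MixedEq Q₂' →
        (∀ x : X, ‖f (2 • x) - 4 • f x - Q₂' x‖ ≤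
          ∑' i : ℕ, (16 : ℝ) ^ i *
            ((1 / 3) * φ (((2 : ℝ) ^ i)⁻¹ • x) (((2 : ℝ) ^ (i + 1))⁻¹ • x) +
              (16 / 3) * φ (((2 : ℝ) ^ (i + 1))⁻¹ • x) (((2 : ℝ) ^ (i + 1))⁻¹ • x))) →
        Q₂' = Q₂) := by
  -- φ 0 0 = 0
  have hφ00 : φ 0 0 = 0 := by
    have h := hlim 0 0
    simp only [smul_zero] at h
    have hle : ∀ n : ℕ, φ 0 0 ≤ (16:ℝ)^n * φ 0 0 := fun n =>
      le_mul_of_one_le_left (hφ0 0 0) (one_le_pow₀ (by norm_num))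
    exact le_antisymm (ge_of_tendsto h (Eventually.of_forall hle)) (hφ0 0 0)
  -- f 0 = 0
  have hf0 : f 0 = 0 := by
    have h := hbd 0 0
    rw [hφ00] at h
    have hD : Dop f 0 0 = 0 := norm_le_zero_iff.mp h
    simp only [Dop, smul_zero, add_zero, sub_zero, zero_add] at hD
    linear_combination (norm := module) (-1/22 : ℝ) • hD
  -- key inequality
  set g : X → Y := fun z => f (2 • z) - 4 • f z with hg
  have hg0 : g 0 = 0 := by simp [hg, hf0]
  have hgeven : ∀ z, g (-z) = g z := by
    intro z; simp only [hg, smul_neg, heven]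
  have key : ∀ z : X, ‖g (2 • z) - (16:ℝ) • g z‖ ≤ (1/3) * φ (2 • z) z + (16/3) * φ z z := by
    intro z
    have e1 : (2:ℕ) • z + 2 • z = 2 • (2 • z) := by abel
    have e2 : (2:ℕ) • z - 2 • z = 0 := by abel
    have e3 : (2:ℕ) • z + z = 3 • z := by abel
    have e4 : (2:ℕ) • z - z = z := by abel
    have e5 : z + (2:ℕ) • z = 3 • z := by abel
    have e6 : z - (2:ℕ) • z = -z := by abel
    have e7 : z + z = (2:ℕ) • z := by abel
    have e8 : z - z = (0:X) := by abel
    have hid : g (2 • z) - (16:ℝ) • g z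
        = (1/3 : ℝ) • Dop f (2 • z) z - (16/3 : ℝ) • Dop f z z := by
      simp only [hg, Dop, e1, e2, e3, e4, e5, e6, e7, e8, heven, hf0]
      module
    calc ‖g (2 • z) - (16:ℝ) • g z‖
        ≤ ‖(1/3 : ℝ) • Dop f (2 • z) z‖ + ‖(16/3 : ℝ) • Dop f z z‖ := by
          rw [hid]; exact norm_sub_le _ _
      _ = (1/3) * ‖Dop f (2 • z) z‖ + (16/3) * ‖Dop f z z‖ := by
          rw [norm_smul, norm_smul]; norm_num
      _ ≤ (1/3) * φ (2 • z) z + (16/3) * φ z z := by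
          gcongr <;> [exact hbd _ _; exact hbd _ _]
  -- scaling in X
  have hhalf : ∀ (n : ℕ) (z : X), (2:ℕ) • (((2:ℝ)^(n+1))⁻¹ • z) = ((2:ℝ)^n)⁻¹ • z := by
    intro n z
    rw [← Nat.cast_smul_eq_nsmul ℝ, smul_smul]
    congr 1
    rw [pow_succ]
    push_cast
    field_simp

  -- sequence and error terms
  set a : X → ℕ → Y := fun x n => (16:ℝ)^n • g (((2:ℝ)^n)⁻¹ • x) with ha
  set d : X → ℕ → ℝ := fun x i => (16 : ℝ) ^ i *
      ((1 / 3) * φ (((2 : ℝ) ^ i)⁻¹ • x) (((2 : ℝ) ^ (i + 1))⁻¹ • x) +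
        (16 / 3) * φ (((2 : ℝ) ^ (i + 1))⁻¹ • x) (((2 : ℝ) ^ (i + 1))⁻¹ • x)) with hd
  have hd0 : ∀ x i, 0 ≤ d x i := by
    intro x i
    have := hφ0 (((2 : ℝ) ^ i)⁻¹ • x) (((2 : ℝ) ^ (i + 1))⁻¹ • x)
    have := hφ0 (((2 : ℝ) ^ (i + 1))⁻¹ • x) (((2 : ℝ) ^ (i + 1))⁻¹ • x)
    have : (0:ℝ) ≤ (16:ℝ)^i := by positivity
    simp only [hd]
    nlinarith
  have hdist : ∀ x n, dist (a x n) (a x (n+1)) ≤ d x n := by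
    intro x n
    rw [dist_eq_norm]
    have heq : a x n - a x (n+1)
        = (16:ℝ)^n • (g (2 • (((2:ℝ)^(n+1))⁻¹ • x)) - (16:ℝ) • g (((2:ℝ)^(n+1))⁻¹ • x)) := by
      show (16:ℝ)^n • g (((2:ℝ)^n)⁻¹ • x) - (16:ℝ)^(n+1) • g (((2:ℝ)^(n+1))⁻¹ • x) = _
      have hp : (16:ℝ)^(n+1) • g (((2:ℝ)^(n+1))⁻¹ • x)
          = (16:ℝ)^n • ((16:ℝ) • g (((2:ℝ)^(n+1))⁻¹ • x)) := by
        rw [smul_smul, pow_succ]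
      rw [← hhalf n x, hp, ← smul_sub]
    rw [heq, norm_smul, norm_pow]
    have hb := key (((2:ℝ)^(n+1))⁻¹ • x)
    rw [hhalf n x] at hb
    have h16 : ‖(16:ℝ)‖ = 16 := by norm_num
    rw [h16, hhalf n x]
    simp only [hd]
    exact mul_le_mul_of_nonneg_left hb (by positivity)
  have hdsum : ∀ x, Summable (d x) := by
    intro x
    set T : ℕ → ℝ := fun i => (16 : ℝ) ^ (i + 1) *
        (φ (((2 : ℝ) ^ (i + 1))⁻¹ • x) (((2 : ℝ) ^ (i + 2))⁻¹ • x) +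
          φ (((2 : ℝ) ^ (i + 1))⁻¹ • x) (((2 : ℝ) ^ (i + 1))⁻¹ • x)) with hT
    have hTsum : Summable T := hsum x
    have hTsum' : Summable (fun i => T (i + 1)) := (summable_nat_add_iff 1).2 hTsum
    have hS : Summable (fun i => (1/3:ℝ) * (T i + T (i + 1))) :=
      ((hTsum.add hTsum').mul_left _)
    have hdle : ∀ i, d x (i + 1) ≤ (1/3:ℝ) * (T i + T (i + 1)) := by
      intro i
      have h1 := hφ0 (((2 : ℝ) ^ (i + 1))⁻¹ • x) (((2 : ℝ) ^ (i + 1))⁻¹ • x)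
      have h2 := hφ0 (((2 : ℝ) ^ (i + 2))⁻¹ • x) (((2 : ℝ) ^ (i + 3))⁻¹ • x)
      have hp : (0:ℝ) < (16:ℝ)^(i+1) := by positivity
      simp only [hd, hT]
      have e16 : (16:ℝ)^(i+2) = 16 * (16:ℝ)^(i+1) := by ring
      have e16' : (16:ℝ)^(i+1+1) = (16:ℝ)^(i+2) := by ring
      have e2 : (i + 1 + 1) = i + 2 := by ring
      have e3 : (i + 1 + 2) = i + 3 := by omega
      rw [e2, e3, e16', e16]
      nlinarith [mul_nonneg hp.le h1, mul_nonneg hp.le h2]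
    have : Summable (fun i => d x (i + 1)) :=
      Summable.of_nonneg_of_le (fun i => hd0 x (i+1)) hdle hS
    exact (summable_nat_add_iff 1).1 this
  have hcauchy : ∀ x, CauchySeq (a x) := fun x =>
    cauchySeq_of_dist_le_of_summable (d x) (hdist x) (hdsum x)

  choose Q₂ hQ using fun x => cauchySeq_tendsto_of_complete (hcauchy x)
  -- the limit statement
  have hseq_eq : ∀ x n, (16 : ℝ) ^ n • (f (((2 : ℝ) ^ n)⁻¹ • (2 • x)) - 4 • f (((2 : ℝ) ^ n)⁻¹ • x))
      = a x n := by
    intro x n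
    simp only [ha]
    rw [smul_comm (((2:ℝ)^n)⁻¹) (2:ℕ) x]
  have hlimit : ∀ x : X, Tendsto (fun n : ℕ =>
      (16 : ℝ) ^ n • (f (((2 : ℝ) ^ n)⁻¹ • (2 • x)) - 4 • f (((2 : ℝ) ^ n)⁻¹ • x)))
      atTop (𝓝 (Q₂ x)) := by
    intro x
    have := hQ x
    simpa only [hseq_eq] using this
  -- error bound
  have hbound : ∀ x : X, ‖f (2 • x) - 4 • f x - Q₂ x‖ ≤ ∑' i, d x i := by
    intro x
    have h := dist_le_tsum_of_dist_le_of_tendsto₀ (d x) (hdist x) (hdsum x) (hQ x)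
    have ha0 : a x 0 = f (2 • x) - 4 • f x := by
      simp only [ha, pow_zero, inv_one, one_smul]; rfl
    rw [ha0, dist_eq_norm] at h
    exact h

  -- basic properties of Q₂
  have hQ0 : Q₂ 0 = 0 := by
    refine tendsto_nhds_unique (hQ 0) ?_
    have : ∀ n, a (0:X) n = 0 := by
      intro n; simp only [ha, smul_zero, hg0]
    rw [show a (0:X) = fun _ => (0:Y) from funext this]
    exact tendsto_const_nhds
  have hQeven : ∀ x, Q₂ (-x) = Q₂ x := by
    intro x
    refine tendsto_nhds_unique (hQ (-x)) ?_
    have : ∀ n, a (-x) n = a x n := by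
      intro n; simp only [ha, smul_neg, hgeven]
    rw [show a (-x) = a x from funext this]
    exact hQ x
  have hQs : ∀ x, Q₂ (2 • x) = (16:ℝ) • Q₂ x := by
    intro x
    have h1 : Tendsto (fun n => a (2 • x) (n+1)) atTop (𝓝 (Q₂ (2 • x))) :=
      (hQ (2 • x)).comp (tendsto_add_atTop_nat 1)
    have h2 : ∀ n, a (2 • x) (n+1) = (16:ℝ) • a x n := by
      intro n
      simp only [ha]
      rw [smul_comm (((2:ℝ)^(n+1))⁻¹) (2:ℕ) x, hhalf n x, smul_smul, pow_succ, mul_comm]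
    rw [funext h2] at h1
    exact tendsto_nhds_unique h1 ((hQ x).const_smul (16:ℝ))

  -- Dop of g versus Dop of f
  have hDg : ∀ u v : X, Dop g u v = Dop f (2 • u) (2 • v) - 4 • Dop f u v := by
    intro u v
    have c1 : (2:ℕ) • (u + 2 • v) = 2 • u + 2 • (2 • v) := by rw [smul_add]
    have c2 : (2:ℕ) • (u - 2 • v) = 2 • u - 2 • (2 • v) := by rw [smul_sub]
    have c3 : (2:ℕ) • (u + v) = 2 • u + 2 • v := smul_add _ _ _
    have c4 : (2:ℕ) • (u - v) = 2 • u - 2 • v := smul_sub _ _ _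
    have c5 : (3:ℕ) • ((2:ℕ) • v) = 2 • (3 • v) := smul_comm _ _ _
    simp only [Dop, hg, c1, c2, c3, c4, c5]
    abel
  have hDa : ∀ (n : ℕ) (x y : X), Dop (fun z => a z n) x y
      = (16:ℝ)^n • Dop g (((2:ℝ)^n)⁻¹ • x) (((2:ℝ)^n)⁻¹ • y) := by
    intro n x y
    set c : ℝ := ((2:ℝ)^n)⁻¹ with hc
    have r1 : c • (x + 2 • y) = c • x + 2 • (c • y) := by
      rw [smul_add, smul_comm]
    have r2 : c • (x - 2 • y) = c • x - 2 • (c • y) := by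
      rw [smul_sub, smul_comm]
    have r3 : c • (x + y) = c • x + c • y := smul_add _ _ _
    have r4 : c • (x - y) = c • x - c • y := smul_sub _ _ _
    have r5 : c • ((3:ℕ) • y) = 3 • (c • y) := smul_comm _ _ _
    have r6 : c • ((2:ℕ) • y) = 2 • (c • y) := smul_comm _ _ _
    simp only [Dop, ha, ← hc, r1, r2, r3, r4, r5, r6]
    module
  have hmixQ : MixedEq Q₂ := by
    rw [mixed_iff]
    intro x y
    have t1 : Tendsto (fun n => Dop (fun z => a z n) x y) atTop (𝓝 (Dop Q₂ x y)) := by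
      simp only [Dop]
      exact (((((((hQ (x+2•y)).add (hQ (x-2•y))).const_smul (3:ℕ)).sub
        (((hQ (x+y)).add (hQ (x-y))).const_smul (12:ℕ))).sub
        ((hQ (3•y)).const_smul (4:ℕ))).add ((hQ (2•y)).const_smul (18:ℕ))).sub
        ((hQ y).const_smul (36:ℕ))).add ((hQ x).const_smul (18:ℕ))
    have t2 : Tendsto (fun n => Dop (fun z => a z n) x y) atTop (𝓝 0) := by
      apply squeeze_zero_norm (a := fun n =>
        (16:ℝ)^n * φ (((2:ℝ)^n)⁻¹ • (2•x)) (((2:ℝ)^n)⁻¹ • (2•y)) +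
          4 * ((16:ℝ)^n * φ (((2:ℝ)^n)⁻¹ • x) (((2:ℝ)^n)⁻¹ • y)))
      · intro n
        set c : ℝ := ((2:ℝ)^n)⁻¹ with hc
        rw [hDa, norm_smul, norm_pow]
        have h16 : ‖(16:ℝ)‖ = 16 := by norm_num
        rw [h16]
        have hn : ‖Dop g (c • x) (c • y)‖ ≤ φ (c • (2•x)) (c • (2•y)) + 4 * φ (c • x) (c • y) := by
          rw [hDg]
          have e1 : (2:ℕ) • (c • x) = c • ((2:ℕ) • x) := (smul_comm _ _ _).symm
          have e2 : (2:ℕ) • (c • y) = c • ((2:ℕ) • y) := (smul_comm _ _ _).symm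
          calc ‖Dop f (2 • (c • x)) (2 • (c • y)) - 4 • Dop f (c • x) (c • y)‖
              ≤ ‖Dop f (2 • (c • x)) (2 • (c • y))‖ + ‖(4:ℕ) • Dop f (c • x) (c • y)‖ :=
                norm_sub_le _ _
            _ ≤ φ (c • (2•x)) (c • (2•y)) + 4 * φ (c • x) (c • y) := by
                rw [e1, e2]
                gcongr
                · exact hbd _ _
                · rw [← Nat.cast_smul_eq_nsmul ℝ, norm_smul]
                  simp only [Nat.cast_ofNat, Real.norm_ofNat]
                  have := hbd (c • x) (c • y)
                  nlinarith [norm_nonneg (Dop f (c • x) (c • y))]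
          
        have hp : (0:ℝ) ≤ (16:ℝ)^n := by positivity
        calc (16:ℝ)^n * ‖Dop g (c • x) (c • y)‖
            ≤ (16:ℝ)^n * (φ (c • (2•x)) (c • (2•y)) + 4 * φ (c • x) (c • y)) :=
              mul_le_mul_of_nonneg_left hn hp
          _ = (16:ℝ)^n * φ (c • (2•x)) (c • (2•y)) + 4 * ((16:ℝ)^n * φ (c • x) (c • y)) := by
              ring
      · simpa using (hlim (2•x) (2•y)).add ((hlim x y).const_mul 4)
    exact tendsto_nhds_unique t1 t2

  have hquartic : IsQuartic Q₂ := by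
    intro x y
    have E2 := hmixQ y y
    have e1 : y + (2:ℕ) • y = 3 • y := by abel
    have e2 : y - (2:ℕ) • y = -y := by abel
    have e3 : y + y = (2:ℕ) • y := by abel
    have e4 : y - y = (0:X) := by abel
    rw [e1, e2, e3, e4, hQeven, hQ0, hQs y] at E2
    have hA : Q₂ ((3:ℕ) • y) = (81:ℝ) • Q₂ y := by
      linear_combination (norm := module) (-1 : ℝ) • E2
    have E1 := hmixQ (2 • x) y
    have f1 : (2:ℕ) • x + 2 • y = 2 • (x + y) := (smul_add 2 x y).symm
    have f2 : (2:ℕ) • x - 2 • y = 2 • (x - y) := (smul_sub 2 x y).symm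
    rw [f1, f2, hQs (x + y), hQs (x - y), hQs y, hQs x, hA] at E1
    linear_combination (norm := module) (-1/12 : ℝ) • E1

  -- rescaling of sums of d
  have hdscale : ∀ (x : X) (n : ℕ),
      (16:ℝ)^n * ∑' i, d (((2:ℝ)^n)⁻¹ • x) i = ∑' i, d x (i + n) := by
    intro x n
    rw [← tsum_mul_left]
    congr 1
    funext i
    simp only [hd]
    have s1 : ((2:ℝ)^i)⁻¹ • (((2:ℝ)^n)⁻¹ • x) = ((2:ℝ)^(i+n))⁻¹ • x := by
      rw [smul_smul, ← mul_inv, ← pow_add]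
    have s2 : ((2:ℝ)^(i+1))⁻¹ • (((2:ℝ)^n)⁻¹ • x) = ((2:ℝ)^(i+n+1))⁻¹ • x := by
      rw [smul_smul]
      congr 1
      rw [← mul_inv, ← pow_add]
      congr 1
      ring
    rw [s1, s2]
    ring
  have htail : ∀ x : X, Tendsto (fun n => ∑' i, d x (i + n)) atTop (𝓝 0) := fun x =>
    tendsto_sum_nat_add (d x)
  -- uniqueness
  have huniq : ∀ Q' : X → Y, IsQuartic Q' → MixedEq Q' →
      (∀ x : X, ‖f (2 • x) - 4 • f x - Q' x‖ ≤ ∑' i, d x i) → Q' = Q₂ := by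
    intro Q' hq _hm hbd'
    have hQ'0 : Q' 0 = 0 := by
      have h := hq 0 0
      simp only [smul_zero, add_zero, sub_zero, zero_add] at h
      linear_combination (norm := module) (-1/24 : ℝ) • h
    have hQ's : ∀ z : X, Q' (2 • z) = (16:ℝ) • Q' z := by
      intro z
      have h := hq z 0
      simp only [smul_zero, add_zero, sub_zero, hQ'0] at h
      linear_combination (norm := module) (1/2 : ℝ) • h
    have hiter : ∀ (Q : X → Y), (∀ z, Q (2 • z) = (16:ℝ) • Q z) → ∀ (x : X) (n : ℕ),
        Q x = (16:ℝ)^n • Q (((2:ℝ)^n)⁻¹ • x) := by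
      intro Q hQsc x n
      induction n with
      | zero => simp
      | succ n ih =>
        rw [ih, ← hhalf n x, hQsc, smul_smul, ← pow_succ]
    funext x
    have hdiff : ∀ n : ℕ, ‖Q' x - Q₂ x‖ ≤ 2 * ∑' i, d x (i + n) := by
      intro n
      set z : X := ((2:ℝ)^n)⁻¹ • x with hz
      have h1 : Q' x - Q₂ x = (16:ℝ)^n • (Q' z - Q₂ z) := by
        rw [hiter Q' hQ's x n, hiter Q₂ hQs x n, smul_sub]
      rw [h1, norm_smul, norm_pow]
      have h16 : ‖(16:ℝ)‖ = 16 := by norm_num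
      rw [h16]
      have h2 : ‖Q' z - Q₂ z‖ ≤ 2 * ∑' i, d z i := by
        have b1 := hbd' z
        have b2 := hbound z
        calc ‖Q' z - Q₂ z‖
            = ‖(f (2 • z) - 4 • f z - Q₂ z) - (f (2 • z) - 4 • f z - Q' z)‖ := by
              congr 1; abel
          _ ≤ ‖f (2 • z) - 4 • f z - Q₂ z‖ + ‖f (2 • z) - 4 • f z - Q' z‖ := norm_sub_le _ _
          _ ≤ 2 * ∑' i, d z i := by linarith
      calc (16:ℝ)^n * ‖Q' z - Q₂ z‖
          ≤ (16:ℝ)^n * (2 * ∑' i, d z i) := mul_le_mul_of_nonneg_left h2 (by positivity)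
        _ = 2 * ((16:ℝ)^n * ∑' i, d z i) := by ring
        _ = 2 * ∑' i, d x (i + n) := by rw [hz, hdscale x n]
    have h0 : Tendsto (fun n => 2 * ∑' i, d x (i + n)) atTop (𝓝 0) := by
      simpa using (htail x).const_mul 2
    have hle : ‖Q' x - Q₂ x‖ ≤ 0 := ge_of_tendsto h0 (Eventually.of_forall hdiff)
    have := norm_le_zero_iff.mp hle
    exact sub_eq_zero.mp this
  exact ⟨Q₂, hlimit, hquartic, hmixQ, hbound, huniq⟩
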